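/- Let 𝐀 be a finite relational structure. If SA¹ decides CSP(𝐀) (i.e., for every 𝐗, feasibility of SA¹(𝐗,𝐀) implies 𝐗 → 𝐀), then CSP(𝐀) is closed under ≡₁-equivalence: for all similar 𝐗₁, 𝐗₂ with the same iterated degree sequence, 𝐗₁ → 𝐀 if and only if 𝐗₂ → 𝐀. -/

import Mathlib

open Finset BigOperators

variable {σ : Type} [Fintype σ] [DecidableEq σ]

/-- Edge labels of the factor graph of a `σ`-structure: pairs `(S,R)` with
`S ⊆ [ar R]`. -/
abbrev FLab (ar : σ → ℕ) : Type := Σ R : σ, Finset (Fin (ar R))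

/-- The type of iterated degrees (colours) after `n` refinement rounds on the labelled
factor graph. The initial colour (a `Bool`) distinguishes elements from constraints. -/
def FColor (ar : σ → ℕ) : ℕ → Type
  | 0 => Bool
  | n + 1 => FColor ar n × Multiset (FLab ar × FColor ar n)

instance fColorDecEq (ar : σ → ℕ) : ∀ n, DecidableEq (FColor ar n)
  | 0 => inferInstanceAs (DecidableEq Bool)
  | n + 1 =>
      letI := fColorDecEq ar n
      inferInstanceAs (DecidableEq (FColor ar n × Multiset (FLab ar × FColor ar n)))

/-- The constraints of a structure: pairs of a symbol `R` and a tuple in `R`'s relation. -/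
abbrev Cstr (ar : σ → ℕ) {D : Type} (rel : ∀ R : σ, Finset (Fin (ar R) → D)) : Type :=
  Σ R : σ, {x : Fin (ar R) → D // x ∈ rel R}

/-- The label of the factor-graph edge between an element `a` and a constraint `c`. -/
def fLabOf (ar : σ → ℕ) {D : Type} [DecidableEq D] {rel : ∀ R : σ, Finset (Fin (ar R) → D)}
    (a : D) (c : Cstr ar rel) : FLab ar :=
  ⟨c.1, Finset.univ.filter (fun i => c.2.1 i = a)⟩

/-- The iterated degree `δ_n` of a vertex of the labelled factor graph of the structure
`rel` (a vertex is either an element, `Sum.inl`, or a constraint, `Sum.inr`):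
`δ_0` distinguishes elements from constraints and
`δ_{n+1}(v) = (δ_n(v), {{(ℓ_{v,w}, δ_n(w)) : w a factor-graph neighbour of v}})`. -/
def fdeg (ar : σ → ℕ) {D : Type} [Fintype D] [DecidableEq D]
    (rel : ∀ R : σ, Finset (Fin (ar R) → D)) :
    (n : ℕ) → (D ⊕ Cstr ar rel) → FColor ar n
  | 0, Sum.inl _ => false
  | 0, Sum.inr _ => true
  | n + 1, Sum.inl a =>
      (fdeg ar rel n (Sum.inl a),
        ((Finset.univ.filter (fun c : Cstr ar rel => ∃ i, c.2.1 i = a)).val.map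
          (fun c => (fLabOf ar a c, fdeg ar rel n (Sum.inr c)))))
  | n + 1, Sum.inr c =>
      (fdeg ar rel n (Sum.inr c),
        ((Finset.univ.filter (fun a : D => ∃ i, c.2.1 i = a)).val.map
          (fun a => (fLabOf ar a c, fdeg ar rel n (Sum.inl a)))))

/-- Two similar structures have the same iterated degree sequence if, for every `n`,
the multisets of iterated degrees of their factor-graph vertices coincide. -/
def SameIDS (ar : σ → ℕ) {D₁ D₂ : Type} [Fintype D₁] [DecidableEq D₁]
    [Fintype D₂] [DecidableEq D₂]
    (rel₁ : ∀ R : σ, Finset (Fin (ar R) → D₁))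
    (rel₂ : ∀ R : σ, Finset (Fin (ar R) → D₂)) : Prop :=
  ∀ n : ℕ,
    Multiset.map (fdeg ar rel₁ n) Finset.univ.val =
      Multiset.map (fdeg ar rel₂ n) Finset.univ.val

/-- A homomorphism between similar relational structures. -/
def IsHom (ar : σ → ℕ) {DX DA : Type}
    (relX : ∀ R : σ, Finset (Fin (ar R) → DX))
    (relA : ∀ R : σ, Finset (Fin (ar R) → DA))
    (h : DX → DA) : Prop :=
  ∀ (R : σ) (x : Fin (ar R) → DX), x ∈ relX R → (fun i => h (x i)) ∈ relA R
/-- A feasible solution of the system SA¹(𝐗,𝐀): variables `p x a` and, for each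
constraint `R(x)` of `𝐗` and each tuple `g` (maps `f : {x} → A` are encoded as tuples
`g` that respect the repetitions of `x`; `q R x g` is forced to `0` otherwise),
subject to (SA1) `Σ_a p x a = 1`, (SA3) marginal consistency, and (SA4) `q = 0`
outside `R^𝐀`. -/
def SA1Solution (ar : σ → ℕ) {DX DA : Type} [Fintype DA] [DecidableEq DA]
    (relX : ∀ R : σ, Finset (Fin (ar R) → DX))
    (relA : ∀ R : σ, Finset (Fin (ar R) → DA))
    (p : DX → DA → ℚ)
    (q : ∀ R : σ, (Fin (ar R) → DX) → (Fin (ar R) → DA) → ℚ) : Prop :=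
  (∀ x a, 0 ≤ p x a ∧ p x a ≤ 1) ∧
  (∀ (R : σ) (x : Fin (ar R) → DX) (g : Fin (ar R) → DA),
      x ∈ relX R → 0 ≤ q R x g ∧ q R x g ≤ 1) ∧
  (∀ x, ∑ a : DA, p x a = 1) ∧
  (∀ (R : σ) (x : Fin (ar R) → DX), x ∈ relX R → ∀ (i : Fin (ar R)) (a : DA),
      p (x i) a =
        ∑ g ∈ Finset.univ.filter (fun g : Fin (ar R) → DA => g i = a), q R x g) ∧
  (∀ (R : σ) (x : Fin (ar R) → DX) (g : Fin (ar R) → DA),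
      x ∈ relX R → g ∉ relA R → q R x g = 0) ∧
  (∀ (R : σ) (x : Fin (ar R) → DX) (g : Fin (ar R) → DA),
      x ∈ relX R → (∃ i j, x i = x j ∧ g i ≠ g j) → q R x g = 0)

/-- Feasibility of the system SA¹(𝐗,𝐀). -/
def SA1Feasible (ar : σ → ℕ) {DX DA : Type} [Fintype DA] [DecidableEq DA]
    (relX : ∀ R : σ, Finset (Fin (ar R) → DX))
    (relA : ∀ R : σ, Finset (Fin (ar R) → DA)) : Prop :=
  ∃ p q, SA1Solution ar relX relA p q

section Aux

variable {σ : Type} [Fintype σ] [DecidableEq σ] (ar : σ → ℕ)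

lemma fdeg_fst {D : Type} [Fintype D] [DecidableEq D]
    (rel : ∀ R : σ, Finset (Fin (ar R) → D)) (n : ℕ) (v : D ⊕ Cstr ar rel) :
    (fdeg ar rel (n + 1) v).1 = fdeg ar rel n v := by
  cases v <;> rfl

lemma fdeg_inl_succ {D : Type} [Fintype D] [DecidableEq D]
    (rel : ∀ R : σ, Finset (Fin (ar R) → D)) (n : ℕ) (a : D) :
    fdeg ar rel (n + 1) (Sum.inl a) =
      (fdeg ar rel n (Sum.inl a),
        ((Finset.univ.filter (fun c : Cstr ar rel => ∃ i, c.2.1 i = a)).val.map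
          (fun c => (fLabOf ar a c, fdeg ar rel n (Sum.inr c))))) := rfl

lemma fdeg_inr_succ {D : Type} [Fintype D] [DecidableEq D]
    (rel : ∀ R : σ, Finset (Fin (ar R) → D)) (n : ℕ) (c : Cstr ar rel) :
    fdeg ar rel (n + 1) (Sum.inr c) =
      (fdeg ar rel n (Sum.inr c),
        ((Finset.univ.filter (fun a : D => ∃ i, c.2.1 i = a)).val.map
          (fun a => (fLabOf ar a c, fdeg ar rel n (Sum.inl a))))) := rfl

/-- projection to the level-0 colour -/
def projb : ∀ n : ℕ, FColor ar n → Bool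
  | 0 => id
  | n + 1 => fun c => projb n c.1

lemma projb_fdeg {D : Type} [Fintype D] [DecidableEq D]
    (rel : ∀ R : σ, Finset (Fin (ar R) → D)) :
    ∀ (n : ℕ) (v : D ⊕ Cstr ar rel), projb ar n (fdeg ar rel n v) = v.isRight
  | 0, Sum.inl _ => rfl
  | 0, Sum.inr _ => rfl
  | n + 1, v => by
      show projb ar n (fdeg ar rel (n+1) v).1 = _
      rw [fdeg_fst]; exact projb_fdeg rel n v

end Aux
section Aux2
set_option linter.unusedSectionVars false

variable {σ : Type} [Fintype σ] [DecidableEq σ] (ar : σ → ℕ)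
variable {D₁ D₂ : Type} [Fintype D₁] [DecidableEq D₁] [Fintype D₂] [DecidableEq D₂]
variable (rel₁ : ∀ R : σ, Finset (Fin (ar R) → D₁)) (rel₂ : ∀ R : σ, Finset (Fin (ar R) → D₂))
variable (N : ℕ)

/-- cross-structure stability at constraint level -/
def StabC : Prop :=
  ∀ (c₁ : Cstr ar rel₁) (c₂ : Cstr ar rel₂),
    fdeg ar rel₁ N (Sum.inr c₁) = fdeg ar rel₂ N (Sum.inr c₂) →
    fdeg ar rel₁ (N + 1) (Sum.inr c₁) = fdeg ar rel₂ (N + 1) (Sum.inr c₂)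

def StabE : Prop :=
  ∀ (y : D₁) (x : D₂),
    fdeg ar rel₁ N (Sum.inl y) = fdeg ar rel₂ N (Sum.inl x) →
    fdeg ar rel₁ (N + 1) (Sum.inl y) = fdeg ar rel₂ (N + 1) (Sum.inl x)

lemma ext1 (hstC : StabC ar rel₁ rel₂ N) {R : σ}
    (x : Fin (ar R) → D₂) (hx : x ∈ rel₂ R)
    (x' : Fin (ar R) → D₁) (hx' : x' ∈ rel₁ R)
    (hcol : fdeg ar rel₁ N (Sum.inr ⟨R, ⟨x', hx'⟩⟩) = fdeg ar rel₂ N (Sum.inr ⟨R, ⟨x, hx⟩⟩))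
    (i : Fin (ar R)) :
    ∃ a : D₁,
      Finset.univ.filter (fun j => x' j = a) = Finset.univ.filter (fun j => x j = x i) ∧
      fdeg ar rel₁ N (Sum.inl a) = fdeg ar rel₂ N (Sum.inl (x i)) := by
  have h1 := hstC _ _ hcol
  have hM := congrArg Prod.snd h1
  rw [fdeg_inr_succ, fdeg_inr_succ] at hM
  have hmem : (fLabOf ar (x i) ⟨R, ⟨x, hx⟩⟩, fdeg ar rel₂ N (Sum.inl (x i))) ∈
      ((Finset.univ.filter (fun a : D₂ => ∃ i', (⟨R, ⟨x, hx⟩⟩ : Cstr ar rel₂).2.1 i' = a)).val.map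
        (fun a => (fLabOf ar a ⟨R, ⟨x, hx⟩⟩, fdeg ar rel₂ N (Sum.inl a)))) := by
    apply Multiset.mem_map_of_mem
    rw [Finset.mem_val, Finset.mem_filter]
    exact ⟨Finset.mem_univ _, ⟨i, rfl⟩⟩
  dsimp only at hM
  rw [← hM] at hmem
  obtain ⟨a, _, heq⟩ := Multiset.mem_map.mp hmem
  refine ⟨a, ?_, congrArg Prod.snd heq⟩
  have h2 := congrArg Prod.fst heq
  simpa [fLabOf] using h2

lemma ext_block (hstC : StabC ar rel₁ rel₂ N) {R : σ}
    (x : Fin (ar R) → D₂) (hx : x ∈ rel₂ R)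
    (x' : Fin (ar R) → D₁) (hx' : x' ∈ rel₁ R)
    (hcol : fdeg ar rel₁ N (Sum.inr ⟨R, ⟨x', hx'⟩⟩) = fdeg ar rel₂ N (Sum.inr ⟨R, ⟨x, hx⟩⟩))
    (i : Fin (ar R)) :
    Finset.univ.filter (fun j => x' j = x' i) = Finset.univ.filter (fun j => x j = x i) ∧
      fdeg ar rel₁ N (Sum.inl (x' i)) = fdeg ar rel₂ N (Sum.inl (x i)) := by
  obtain ⟨a, hfa, hca⟩ := ext1 ar rel₁ rel₂ N hstC x hx x' hx' hcol i
  have hia : x' i = a := by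
    have : i ∈ Finset.univ.filter (fun j => x' j = a) := by
      rw [hfa]; simp
    simpa using this
  rw [hia]; exact ⟨hfa, hca⟩

end Aux2
section Aux3
set_option linter.unusedSectionVars false
set_option maxHeartbeats 1000000

variable {σ : Type} [Fintype σ] [DecidableEq σ] (ar : σ → ℕ)
variable {D₁ D₂ : Type} [Fintype D₁] [DecidableEq D₁] [Fintype D₂] [DecidableEq D₂]
variable (rel₁ : ∀ R : σ, Finset (Fin (ar R) → D₁)) (rel₂ : ∀ R : σ, Finset (Fin (ar R) → D₂))
variable (N : ℕ)

/-- colour class in `D₁` of the colour of an element of `D₂` -/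
def Ecl (x : D₂) : Finset D₁ :=
  Finset.univ.filter (fun y => fdeg ar rel₁ N (Sum.inl y) = fdeg ar rel₂ N (Sum.inl x))

/-- colour class in constraints of `rel₁ R` of the colour of a constraint of `rel₂` -/
def Kcl (R : σ) (x : Fin (ar R) → D₂) (hx : x ∈ rel₂ R) :
    Finset {x' : Fin (ar R) → D₁ // x' ∈ rel₁ R} :=
  Finset.univ.filter
    (fun x' => fdeg ar rel₁ N (Sum.inr ⟨R, x'⟩) = fdeg ar rel₂ N (Sum.inr ⟨R, ⟨x, hx⟩⟩))

variable {DA : Type} [Fintype DA] [DecidableEq DA]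

def pdef (h₁ : D₁ → DA) (x : D₂) (a : DA) : ℚ :=
  (((Ecl ar rel₁ rel₂ N x).filter (fun y => h₁ y = a)).card : ℚ) /
    ((Ecl ar rel₁ rel₂ N x).card : ℚ)

def qdef (h₁ : D₁ → DA) (R : σ) (x : Fin (ar R) → D₂) (g : Fin (ar R) → DA) : ℚ :=
  if hx : x ∈ rel₂ R then
    (((Kcl ar rel₁ rel₂ N R x hx).filter (fun x' => (fun i => h₁ (x'.1 i)) = g)).card : ℚ) /
      ((Kcl ar rel₁ rel₂ N R x hx).card : ℚ)
  else 0

lemma ratio_bounds {α : Type*} (s t : Finset α) (h : t ⊆ s) :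
    0 ≤ (t.card : ℚ) / s.card ∧ (t.card : ℚ) / s.card ≤ 1 := by
  rcases Nat.eq_zero_or_pos s.card with h0 | h0
  · have ht : t.card = 0 := le_antisymm (h0 ▸ Finset.card_le_card h) (Nat.zero_le _)
    simp [ht, h0]
  · have hs : (0 : ℚ) < s.card := by exact_mod_cast h0
    constructor
    · positivity
    · rw [div_le_one hs]
      exact_mod_cast Finset.card_le_card h

lemma p_bounds (h₁ : D₁ → DA) (x : D₂) (a : DA) :
    0 ≤ pdef ar rel₁ rel₂ N h₁ x a ∧ pdef ar rel₁ rel₂ N h₁ x a ≤ 1 :=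
  ratio_bounds _ _ (Finset.filter_subset _ _)

lemma q_bounds (h₁ : D₁ → DA) (R : σ) (x : Fin (ar R) → D₂) (g : Fin (ar R) → DA) :
    0 ≤ qdef ar rel₁ rel₂ N h₁ R x g ∧ qdef ar rel₁ rel₂ N h₁ R x g ≤ 1 := by
  unfold qdef
  split
  · exact ratio_bounds _ _ (Finset.filter_subset _ _)
  · norm_num

lemma p_sum (h₁ : D₁ → DA)
    (hcnt : ∀ x : D₂, ∃ y : D₁, fdeg ar rel₁ N (Sum.inl y) = fdeg ar rel₂ N (Sum.inl x))
    (x : D₂) : ∑ a : DA, pdef ar rel₁ rel₂ N h₁ x a = 1 := by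
  unfold pdef
  rw [← Finset.sum_div]
  have hnum : ∑ a : DA, (((Ecl ar rel₁ rel₂ N x).filter (fun y => h₁ y = a)).card : ℚ) =
      ((Ecl ar rel₁ rel₂ N x).card : ℚ) := by
    rw [← Nat.cast_sum]
    norm_cast
    exact (Finset.card_eq_sum_card_fiberwise (fun y _ => Finset.mem_univ (h₁ y))).symm
  rw [hnum]
  apply div_self
  obtain ⟨y, hy⟩ := hcnt x
  have : y ∈ Ecl ar rel₁ rel₂ N x := Finset.mem_filter.mpr ⟨Finset.mem_univ _, hy⟩
  have hpos : 0 < (Ecl ar rel₁ rel₂ N x).card := Finset.card_pos.mpr ⟨y, this⟩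
  exact_mod_cast hpos.ne'

lemma q_outside (relA : ∀ R : σ, Finset (Fin (ar R) → DA)) (h₁ : D₁ → DA)
    (hh : IsHom ar rel₁ relA h₁)
    (R : σ) (x : Fin (ar R) → D₂) (g : Fin (ar R) → DA)
    (hx : x ∈ rel₂ R) (hg : g ∉ relA R) : qdef ar rel₁ rel₂ N h₁ R x g = 0 := by
  unfold qdef
  rw [dif_pos hx]
  have : (Kcl ar rel₁ rel₂ N R x hx).filter (fun x' => (fun i => h₁ (x'.1 i)) = g) = ∅ := by
    rw [Finset.filter_eq_empty_iff]
    intro x' _ heq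
    exact hg (heq ▸ hh R x'.1 x'.2)
  simp [this]

lemma q_kernel (h₁ : D₁ → DA) (hstC : StabC ar rel₁ rel₂ N)
    (R : σ) (x : Fin (ar R) → D₂) (g : Fin (ar R) → DA)
    (hx : x ∈ rel₂ R) (hk : ∃ i j, x i = x j ∧ g i ≠ g j) :
    qdef ar rel₁ rel₂ N h₁ R x g = 0 := by
  obtain ⟨i, j, hij, hgij⟩ := hk
  unfold qdef
  rw [dif_pos hx]
  have : (Kcl ar rel₁ rel₂ N R x hx).filter (fun x' => (fun i => h₁ (x'.1 i)) = g) = ∅ := by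
    rw [Finset.filter_eq_empty_iff]
    intro x' hx' heq
    have hcol : fdeg ar rel₁ N (Sum.inr ⟨R, x'⟩) = fdeg ar rel₂ N (Sum.inr ⟨R, ⟨x, hx⟩⟩) :=
      (Finset.mem_filter.mp hx').2
    obtain ⟨a, hfa, -⟩ := ext1 ar rel₁ rel₂ N hstC x hx x'.1 x'.2 hcol i
    have hi : x'.1 i = a := by
      have : i ∈ Finset.univ.filter (fun j => x'.1 j = a) := by rw [hfa]; simp
      simpa using this
    have hj : x'.1 j = a := by
      have : j ∈ Finset.univ.filter (fun j => x'.1 j = a) := by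
        rw [hfa]; simp [hij.symm]
      simpa using this
    apply hgij
    rw [← congrFun heq i, ← congrFun heq j]
    simp [hi, hj]
  simp [this]

end Aux3
section Aux4
set_option linter.unusedSectionVars false
set_option maxHeartbeats 1000000

variable {σ : Type} [Fintype σ] [DecidableEq σ] (ar : σ → ℕ)
variable {D₁ D₂ : Type} [Fintype D₁] [DecidableEq D₁] [Fintype D₂] [DecidableEq D₂]
variable (rel₁ : ∀ R : σ, Finset (Fin (ar R) → D₁)) (rel₂ : ∀ R : σ, Finset (Fin (ar R) → D₂))
variable (N : ℕ) {DA : Type} [Fintype DA] [DecidableEq DA]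

lemma p_marg (h₁ : D₁ → DA) (hstC : StabC ar rel₁ rel₂ N) (hstE : StabE ar rel₁ rel₂ N)
    (R : σ) (x : Fin (ar R) → D₂) (hx : x ∈ rel₂ R) (i : Fin (ar R)) (a : DA) :
    pdef ar rel₁ rel₂ N h₁ (x i) a =
      ∑ g ∈ Finset.univ.filter (fun g : Fin (ar R) → DA => g i = a),
        qdef ar rel₁ rel₂ N h₁ R x g := by
  classical
  unfold pdef qdef
  simp only [dif_pos hx]
  set Kx := Kcl ar rel₁ rel₂ N R x hx with hKx
  set Ex := Ecl ar rel₁ rel₂ N (x i) with hEx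
  set S := Finset.univ.filter (fun j => x j = x i) with hS
  set δ := fdeg ar rel₂ N (Sum.inr ⟨R, ⟨x, hx⟩⟩) with hδ
  set γ := fdeg ar rel₂ N (Sum.inl (x i)) with hγ
  set ℓ : FLab ar := ⟨R, S⟩ with hℓ
  -- membership facts
  have hm : ∀ x' ∈ Kx, fdeg ar rel₁ N (Sum.inr ⟨R, x'⟩) = δ :=
    fun x' h => (Finset.mem_filter.mp h).2
  have hblockE : ∀ x' ∈ Kx,
      Finset.univ.filter (fun j => x'.1 j = x'.1 i) = S ∧
        fdeg ar rel₁ N (Sum.inl (x'.1 i)) = γ :=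
    fun x' h => ext_block ar rel₁ rel₂ N hstC x hx x'.1 x'.2 (hm x' h) i
  have hA : ∀ x' ∈ Kx, x'.1 i ∈ Ex :=
    fun x' h => Finset.mem_filter.mpr ⟨Finset.mem_univ _, (hblockE x' h).2⟩
  -- the constant degree d
  set M₂ := ((Finset.univ.filter (fun c : Cstr ar rel₂ => ∃ i', c.2.1 i' = x i)).val.map
      (fun c => (fLabOf ar (x i) c, fdeg ar rel₂ N (Sum.inr c)))) with hM₂
  set d := Multiset.count (ℓ, δ) M₂ with hd
  have hdpos : 0 < d := by
    rw [hd]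
    apply Multiset.count_pos.mpr
    apply Multiset.mem_map.mpr
    refine ⟨⟨R, ⟨x, hx⟩⟩, ?_, ?_⟩
    · rw [Finset.mem_val, Finset.mem_filter]
      exact ⟨Finset.mem_univ _, ⟨i, rfl⟩⟩
    · simp only [fLabOf, hℓ, hδ, hS]
  -- each fibre has size d
  have hmy : ∀ y ∈ Ex, (Kx.filter (fun x' => x'.1 i = y)).card = d := by
    intro y hy
    have hcy : fdeg ar rel₁ N (Sum.inl y) = γ := (Finset.mem_filter.mp hy).2
    have h1 := hstE y (x i) hcy
    have hM := congrArg Prod.snd h1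
    rw [fdeg_inl_succ, fdeg_inl_succ] at hM
    dsimp only at hM
    rw [hd, hM₂, ← hM, Multiset.count_map]
    rw [← Finset.filter_val, ← Finset.card_def]
    apply Finset.card_bij (fun (x' : {x' // x' ∈ rel₁ R}) _ => (⟨R, x'⟩ : Cstr ar rel₁))
    · intro x' hx'
      obtain ⟨hK, hiy⟩ := Finset.mem_filter.mp hx'
      rw [Finset.mem_filter]
      refine ⟨Finset.mem_filter.mpr ⟨Finset.mem_univ _, ⟨i, hiy⟩⟩, ?_⟩
      have hlab : fLabOf ar y (⟨R, x'⟩ : Cstr ar rel₁) = ℓ := by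
        show (⟨R, Finset.univ.filter (fun j => x'.1 j = y)⟩ : FLab ar) = ℓ
        rw [hℓ, ← (hblockE x' hK).1, ← hiy]
      rw [hlab, hm x' hK]
    · intro a _ b _ h
      simpa using h
    · rintro ⟨R', z⟩ hc
      obtain ⟨hc1, hc2⟩ := Finset.mem_filter.mp hc
      have hfst := congrArg Prod.fst hc2
      have hsnd := congrArg Prod.snd hc2
      dsimp only at hfst hsnd
      rw [hℓ] at hfst
      have hfst' : (⟨R, S⟩ : FLab ar) =
          ⟨R', Finset.univ.filter (fun j => z.1 j = y)⟩ := hfst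
      injection hfst' with hR hSf
      subst hR
      have hSf' : S = Finset.univ.filter (fun j => z.1 j = y) := eq_of_heq hSf
      have hziy : z.1 i = y := by
        have hiS : i ∈ S := by rw [hS]; simp
        rw [hSf'] at hiS
        simpa using hiS
      refine ⟨z, Finset.mem_filter.mpr ⟨Finset.mem_filter.mpr ⟨Finset.mem_univ _, hsnd.symm⟩, hziy⟩, rfl⟩
  -- step III : Kx.card = Ex.card * d
  have hstep3 : Kx.card = Ex.card * d := by
    rw [Finset.card_eq_sum_card_fiberwise hA, Finset.sum_congr rfl hmy,
      Finset.sum_const, smul_eq_mul]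
  -- step II
  have hstep2 : (Kx.filter (fun x' => h₁ (x'.1 i) = a)).card =
      (Ex.filter (fun y => h₁ y = a)).card * d := by
    have hmap : ∀ x' ∈ Kx.filter (fun x' => h₁ (x'.1 i) = a),
        x'.1 i ∈ Ex.filter (fun y => h₁ y = a) := by
      intro x' h
      obtain ⟨h1, h2⟩ := Finset.mem_filter.mp h
      exact Finset.mem_filter.mpr ⟨hA x' h1, h2⟩
    rw [Finset.card_eq_sum_card_fiberwise hmap]
    have hfib : ∀ y ∈ Ex.filter (fun y => h₁ y = a),
        ((Kx.filter (fun x' => h₁ (x'.1 i) = a)).filter (fun x' => x'.1 i = y)).card = d := by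
      intro y hy
      obtain ⟨hy1, hy2⟩ := Finset.mem_filter.mp hy
      have : (Kx.filter (fun x' => h₁ (x'.1 i) = a)).filter (fun x' => x'.1 i = y) =
          Kx.filter (fun x' => x'.1 i = y) := by
        rw [Finset.filter_filter]
        apply Finset.filter_congr
        intro x' _
        constructor
        · rintro ⟨-, h⟩; exact h
        · intro h; exact ⟨by rw [h]; exact hy2, h⟩
      rw [this]
      exact hmy y hy1
    rw [Finset.sum_congr rfl hfib, Finset.sum_const, smul_eq_mul]
  -- step I
  have hstep1 : (Kx.filter (fun x' => h₁ (x'.1 i) = a)).card =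
      ∑ g ∈ Finset.univ.filter (fun g : Fin (ar R) → DA => g i = a),
        (Kx.filter (fun x' => (fun i' => h₁ (x'.1 i')) = g)).card := by
    have hmap : ∀ x' ∈ Kx.filter (fun x' => h₁ (x'.1 i) = a),
        (fun i' => h₁ (x'.1 i')) ∈
          Finset.univ.filter (fun g : Fin (ar R) → DA => g i = a) := by
      intro x' h
      exact Finset.mem_filter.mpr ⟨Finset.mem_univ _, (Finset.mem_filter.mp h).2⟩
    rw [Finset.card_eq_sum_card_fiberwise hmap]
    apply Finset.sum_congr rfl
    intro g hg
    congr 1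
    rw [Finset.filter_filter]
    apply Finset.filter_congr
    intro x' _
    constructor
    · rintro ⟨-, h⟩; exact h
    · intro h
      refine ⟨?_, h⟩
      have h2 : h₁ (x'.1 i) = g i := congrFun h i
      rw [h2]
      exact (Finset.mem_filter.mp hg).2
  -- assemble
  rw [← Finset.sum_div, ← Nat.cast_sum, ← hstep1, hstep2, hstep3]
  have hd0 : ((d : ℚ)) ≠ 0 := by exact_mod_cast hdpos.ne'
  push_cast
  rw [mul_div_mul_right _ _ hd0]
end Aux4
section Aux5
set_option linter.unusedSectionVars false
set_option maxHeartbeats 1000000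

variable {σ : Type} [Fintype σ] [DecidableEq σ] (ar : σ → ℕ)
variable {D₁ D₂ : Type} [Fintype D₁] [DecidableEq D₁] [Fintype D₂] [DecidableEq D₂]
variable (rel₁ : ∀ R : σ, Finset (Fin (ar R) → D₁)) (rel₂ : ∀ R : σ, Finset (Fin (ar R) → D₂))

lemma sa1_feasible_aux {DA : Type} [Fintype DA] [DecidableEq DA]
    (relA : ∀ R : σ, Finset (Fin (ar R) → DA)) (N : ℕ)
    (hstC : StabC ar rel₁ rel₂ N) (hstE : StabE ar rel₁ rel₂ N)
    (hcnt : ∀ x : D₂, ∃ y : D₁, fdeg ar rel₁ N (Sum.inl y) = fdeg ar rel₂ N (Sum.inl x))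
    (h₁ : D₁ → DA) (hh : IsHom ar rel₁ relA h₁) :
    SA1Feasible ar rel₂ relA := by
  refine ⟨pdef ar rel₁ rel₂ N h₁, qdef ar rel₁ rel₂ N h₁,
    p_bounds ar rel₁ rel₂ N h₁,
    fun R x g _ => q_bounds ar rel₁ rel₂ N h₁ R x g,
    p_sum ar rel₁ rel₂ N h₁ hcnt,
    fun R x hx i a => p_marg ar rel₁ rel₂ N h₁ hstC hstE R x hx i a,
    fun R x g hx hg => q_outside ar rel₁ rel₂ N relA h₁ hh R x g hx hg,
    fun R x g hx hk => q_kernel ar rel₁ rel₂ N h₁ hstC R x g hx hk⟩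

lemma exists_stable :
    ∃ N : ℕ, StabC ar rel₁ rel₂ N ∧ StabE ar rel₁ rel₂ N := by
  classical
  let V := (D₁ ⊕ Cstr ar rel₁) ⊕ (D₂ ⊕ Cstr ar rel₂)
  let F : ∀ n : ℕ, V → FColor ar n :=
    fun n => Sum.elim (fdeg ar rel₁ n) (fdeg ar rel₂ n)
  let k : ℕ → ℕ := fun n => (Finset.univ.image (F n)).card
  have hF : ∀ (n : ℕ) (v : V), (F (n + 1) v).1 = F n v := by
    intro n v
    cases v with
    | inl w => exact fdeg_fst ar rel₁ n w
    | inr w => exact fdeg_fst ar rel₂ n w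
  have himg : ∀ n : ℕ, Finset.univ.image (F n) =
      (Finset.univ.image (F (n + 1))).image Prod.fst := by
    intro n
    refine Eq.trans ?_ Finset.image_image.symm
    exact Finset.image_congr (fun v _ => (hF n v).symm)
  have hmono : ∀ n, k n ≤ k (n + 1) := by
    intro n
    show (Finset.univ.image (F n)).card ≤ _
    rw [himg n]
    exact Finset.card_image_le
  have hbound : ∀ n, k n ≤ Fintype.card V := by
    intro n
    calc (Finset.univ.image (F n)).card ≤ (Finset.univ : Finset V).card :=
          Finset.card_image_le
      _ = Fintype.card V := Finset.card_univ
  have hex : ∃ N, k N = k (N + 1) := by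
    by_contra hne
    push_neg at hne
    have hstrict : ∀ n, k n < k (n + 1) := fun n => lt_of_le_of_ne (hmono n) (hne n)
    have hgrow : ∀ n, n ≤ k n := by
      intro n
      induction n with
      | zero => exact Nat.zero_le _
      | succ m ih => exact Nat.lt_of_le_of_lt ih (hstrict m)
    have := hbound (Fintype.card V + 1)
    have := hgrow (Fintype.card V + 1)
    omega
  obtain ⟨N, hN⟩ := hex
  have hinj : Set.InjOn Prod.fst ((Finset.univ.image (F (N + 1))) : Set (FColor ar (N + 1))) := by
    apply Finset.injOn_of_card_image_eq
    rw [← himg N]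
    exact hN
  have hstab : ∀ u v : V, F N u = F N v → F (N + 1) u = F (N + 1) v := by
    intro u v h
    apply hinj (Finset.mem_coe.mpr (Finset.mem_image_of_mem _ (Finset.mem_univ u)))
      (Finset.mem_coe.mpr (Finset.mem_image_of_mem _ (Finset.mem_univ v)))
    rw [hF N u, hF N v]
    exact h
  refine ⟨N, ?_, ?_⟩
  · intro c₁ c₂ h
    exact hstab (Sum.inl (Sum.inr c₁)) (Sum.inr (Sum.inr c₂)) h
  · intro y x h
    exact hstab (Sum.inl (Sum.inl y)) (Sum.inr (Sum.inl x)) h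

lemma cnt_of_sameIDS (hids : SameIDS ar rel₁ rel₂) (N : ℕ) (x : D₂) :
    ∃ y : D₁, fdeg ar rel₁ N (Sum.inl y) = fdeg ar rel₂ N (Sum.inl x) := by
  have h := hids N
  have hmem : fdeg ar rel₂ N (Sum.inl x) ∈
      Multiset.map (fdeg ar rel₂ N) (Finset.univ.val) :=
    Multiset.mem_map_of_mem _ (Finset.mem_val.mpr (Finset.mem_univ _))
  rw [← h] at hmem
  obtain ⟨v, -, hv⟩ := Multiset.mem_map.mp hmem
  cases v with
  | inl y => exact ⟨y, hv⟩
  | inr c =>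
      exfalso
      have h1 := projb_fdeg ar rel₁ N (Sum.inr c)
      rw [hv, projb_fdeg ar rel₂ N (Sum.inl x)] at h1
      simp at h1

lemma hom_transfer {DA : Type} [Fintype DA] [DecidableEq DA]
    (relA : ∀ R : σ, Finset (Fin (ar R) → DA))
    (hdec : ∀ (DX : Type) [Fintype DX] [DecidableEq DX]
      (relX : ∀ R : σ, Finset (Fin (ar R) → DX)),
      SA1Feasible ar relX relA → ∃ h : DX → DA, IsHom ar relX relA h)
    (hids : SameIDS ar rel₁ rel₂)
    (h₁ : D₁ → DA) (hh : IsHom ar rel₁ relA h₁) :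
    ∃ h : D₂ → DA, IsHom ar rel₂ relA h := by
  obtain ⟨N, hstC, hstE⟩ := exists_stable ar rel₁ rel₂
  exact hdec D₂ rel₂
    (sa1_feasible_aux ar rel₁ rel₂ relA N hstC hstE (cnt_of_sameIDS ar rel₁ rel₂ hids N) h₁ hh)

end Aux5

/-- If SA¹ decides CSP(𝐀) — i.e. feasibility of SA¹(𝐗,𝐀) implies that 𝐗 is
homomorphic to 𝐀 for every input 𝐗 — then CSP(𝐀) is closed under ≡₁-equivalence:
any two similar inputs with the same iterated degree sequence are either both
homomorphic to 𝐀 or both not. -/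
theorem stmt14 (ar : σ → ℕ) {DA : Type} [Fintype DA] [DecidableEq DA]
    (relA : ∀ R : σ, Finset (Fin (ar R) → DA))
    (hdec : ∀ (DX : Type) [Fintype DX] [DecidableEq DX]
      (relX : ∀ R : σ, Finset (Fin (ar R) → DX)),
      SA1Feasible ar relX relA → ∃ h : DX → DA, IsHom ar relX relA h) :
    ∀ (D₁ D₂ : Type) [Fintype D₁] [DecidableEq D₁] [Fintype D₂] [DecidableEq D₂]
      (rel₁ : ∀ R : σ, Finset (Fin (ar R) → D₁))
      (rel₂ : ∀ R : σ, Finset (Fin (ar R) → D₂)),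
      SameIDS ar rel₁ rel₂ →
        ((∃ h : D₁ → DA, IsHom ar rel₁ relA h) ↔
          (∃ h : D₂ → DA, IsHom ar rel₂ relA h)) := by
  intro D₁ D₂ _ _ _ _ rel₁ rel₂ hids
  constructor
  · rintro ⟨h₁, hh⟩
    exact hom_transfer ar rel₁ rel₂ relA hdec hids h₁ hh
  · rintro ⟨h₂, hh⟩
    exact hom_transfer ar rel₂ rel₁ relA hdec (fun n => (hids n).symm) h₂ hh
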